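/- For p ≥ 0 and all t ∈ [0,1], the function g(t) = (t^{p+2} + t^{p+1} + t + 1)/(1+t)^{p+2} is decreasing on [0,1], and hence g(t) ≥ g(1) = 2^{-p} for all t ∈ [0,1]. -/

import Mathlib

open Real Set

theorem g_antitone_and_ge (p : ℝ) (hp : 0 ≤ p)
    (g : ℝ → ℝ) (hg : ∀ t, g t = (t ^ (p + 2) + t ^ (p + 1) + t + 1) / (1 + t) ^ (p + 2)) :
    AntitoneOn g (Set.Icc 0 1) ∧ g 1 = 2 ^ (-p) ∧
      ∀ t ∈ Set.Icc (0 : ℝ) 1, g t ≥ 2 ^ (-p) := by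
  have hq1 : (1:ℝ) ≤ p + 1 := by linarith
  set F : ℝ → ℝ := fun u => u ^ (p+1) + (1 - u) ^ (p+1) with hF
  have hderiv : ∀ u : ℝ, HasDerivAt F ((p+1) * u ^ p - (p+1) * (1-u) ^ p) u := by
    intro u
    have h1 : HasDerivAt (fun u : ℝ => u ^ (p+1)) ((p+1) * u ^ (p+1-1)) u :=
      Real.hasDerivAt_rpow_const (Or.inr hq1)
    have h2 : HasDerivAt (fun u : ℝ => (1 - u)) (-1) u := by
      simpa using (hasDerivAt_id' u).const_sub (1:ℝ)
    have h3 : HasDerivAt (fun u : ℝ => (1 - u) ^ (p+1))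
        (-1 * ((p+1) * (1 - u) ^ (p+1-1))) u := by
      have := (Real.hasDerivAt_rpow_const (p := p+1) (x := 1 - u) (Or.inr hq1)).comp u h2
      exact this.congr_deriv (by ring)
    have := h1.add h3
    simp only [add_sub_cancel_right] at h1 h3 this ⊢
    exact this.congr_deriv (by ring)
  have hFanti : AntitoneOn F (Icc 0 (1/2)) := by
    apply antitoneOn_of_deriv_nonpos (convex_Icc _ _)
    · exact fun u _ => (hderiv u).differentiableAt.continuousAt.continuousWithinAt
    · exact fun u _ => (hderiv u).differentiableAt.differentiableWithinAt
    · intro u hu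
      rw [interior_Icc] at hu
      rw [(hderiv u).deriv]
      have h1 : u ^ p ≤ (1 - u) ^ p :=
        Real.rpow_le_rpow (le_of_lt hu.1) (by linarith [hu.2]) hp
      nlinarith
  have hmap : ∀ t ∈ Icc (0:ℝ) 1, t / (1 + t) ∈ Icc (0:ℝ) (1/2) := by
    intro t ht
    obtain ⟨h0, h1⟩ := ht
    have hpos : (0:ℝ) < 1 + t := by linarith
    constructor
    · positivity
    · rw [div_le_div_iff₀ hpos (by norm_num)]; linarith
  have hmono : ∀ s ∈ Icc (0:ℝ) 1, ∀ t ∈ Icc (0:ℝ) 1, s ≤ t →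
      s / (1 + s) ≤ t / (1 + t) := by
    intro s hs t ht hst
    rw [div_le_div_iff₀ (by linarith [hs.1]) (by linarith [ht.1])]
    nlinarith [hs.1]
  have key : ∀ t ∈ Icc (0:ℝ) 1, g t = F (t / (1 + t)) := by
    intro t ht
    obtain ⟨h0, h1⟩ := ht
    have hpos : (0:ℝ) < 1 + t := by linarith
    have hone : 1 - t / (1 + t) = 1 / (1 + t) := by field_simp; ring
    rw [hg, hF]
    simp only [hone]
    rw [Real.div_rpow h0 hpos.le, Real.div_rpow zero_le_one hpos.le, Real.one_rpow]
    rcases eq_or_lt_of_le h0 with h | h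
    · subst h
      rw [Real.zero_rpow (by linarith : p + 2 ≠ 0), Real.zero_rpow (by linarith : p + 1 ≠ 0)]
      norm_num
    · have ht2 : t ^ (p+2) = t ^ (p+1) * t := by
        rw [show p + 2 = (p+1) + 1 by ring, Real.rpow_add h, Real.rpow_one]
      have hs2 : (1+t) ^ (p+2) = (1+t) ^ (p+1) * (1+t) := by
        rw [show p + 2 = (p+1) + 1 by ring, Real.rpow_add hpos, Real.rpow_one]
      rw [ht2, hs2]
      have hne : (1+t) ^ (p+1) ≠ 0 := ne_of_gt (Real.rpow_pos_of_pos hpos _)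
      field_simp
      ring
  have hanti : AntitoneOn g (Icc 0 1) := by
    intro s hs t ht hst
    rw [key s hs, key t ht]
    exact hFanti (hmap s hs) (hmap t ht) (hmono s hs t ht hst)
  have hg1 : g 1 = 2 ^ (-p) := by
    rw [hg]
    rw [Real.one_rpow, Real.one_rpow]
    norm_num
    rw [show p + 2 = -(-p) + 2 by ring, Real.rpow_add (by norm_num : (0:ℝ) < 2)]
    rw [Real.rpow_neg (by norm_num : (0:ℝ) ≤ 2)]
    have h2 : (2:ℝ) ^ ((2:ℝ)) = 4 := by
      rw [show (2:ℝ) = ((2:ℕ):ℝ) by norm_num, Real.rpow_natCast]; norm_num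
    rw [h2]
    have hpp : (0:ℝ) < 2 ^ (-p) := Real.rpow_pos_of_pos (by norm_num) _
    rw [Real.rpow_neg (by norm_num : (0:ℝ) ≤ 2)] at hpp ⊢
    field_simp
  refine ⟨hanti, hg1, fun t ht => ?_⟩
  have := hanti ht (by constructor <;> norm_num) ht.2
  rw [hg1] at this
  exact this
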